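/- arXiv:2505.15975 — 3 statements merged into one kernel-verified Lean document; each statement's English description precedes it below -/
import Mathlib

section
/- If P(X) = -b1*X + b2*X^2, ρ(X) = -b1*X + 3*b2*X^2, and for X ≥ 0 with ρ(X) ≠ 0 we set w(X) = P(X)/ρ(X) and c_s^2(X) = P'(X)/ρ'(X), then whenever both are defined, c_s^2(X) = (1 + w(X))/(5 − 3·w(X)). -/
/-- For `P X = -b1*X + b2*X^2` and `ρ X = -b1*X + 3*b2*X^2`, with `w = P/ρ` and
`c_s^2 = P'/ρ'`, whenever both are defined one has `c_s^2 = (1+w)/(5-3w)`. -/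
theorem kessence_sound_speed_eq_of_eos (b1 b2 : ℝ) :
    ∀ X : ℝ, 0 ≤ X →
      (-b1 * X + 3 * b2 * X ^ 2) ≠ 0 →
      deriv (fun X : ℝ => -b1 * X + 3 * b2 * X ^ 2) X ≠ 0 →
      (5 - 3 * ((-b1 * X + b2 * X ^ 2) / (-b1 * X + 3 * b2 * X ^ 2))) ≠ 0 →
      deriv (fun X : ℝ => -b1 * X + b2 * X ^ 2) X /
          deriv (fun X : ℝ => -b1 * X + 3 * b2 * X ^ 2) X =
        (1 + (-b1 * X + b2 * X ^ 2) / (-b1 * X + 3 * b2 * X ^ 2)) /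
          (5 - 3 * ((-b1 * X + b2 * X ^ 2) / (-b1 * X + 3 * b2 * X ^ 2))) := by
  intro X _ hρ hρ' hw
  have hX : X ≠ 0 := by
    rintro rfl; simp at hρ
  have hd1 : deriv (fun X : ℝ => -b1 * X + b2 * X ^ 2) X = -b1 + 2 * b2 * X := by
    have : HasDerivAt (fun X : ℝ => -b1 * X + b2 * X ^ 2) (-b1 + 2 * b2 * X) X := by
      have h1 := (hasDerivAt_id X).const_mul (-b1)
      have h2 := ((hasDerivAt_pow 2 X).const_mul b2)
      simpa [mul_comm, mul_assoc, mul_left_comm, Pi.add_def] using h1.add h2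
    exact this.deriv
  have hd2 : deriv (fun X : ℝ => -b1 * X + 3 * b2 * X ^ 2) X = -b1 + 6 * b2 * X := by
    have : HasDerivAt (fun X : ℝ => -b1 * X + 3 * b2 * X ^ 2) (-b1 + 6 * b2 * X) X := by
      have h1 := (hasDerivAt_id X).const_mul (-b1)
      have h2 := ((hasDerivAt_pow 2 X).const_mul (3 * b2))
      have := h1.add h2
      exact this.congr_deriv (by ring)
    exact this.deriv
  rw [hd2] at hρ'
  have hden : b1 - 3 * b2 * X ≠ 0 := by
    intro h
    apply hρ
    have : b1 = 3 * b2 * X := by linarith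
    rw [this]; ring
  have hwval : (-b1 * X + b2 * X ^ 2) / (-b1 * X + 3 * b2 * X ^ 2)
      = (b1 - b2 * X) / (b1 - 3 * b2 * X) := by
    rw [div_eq_div_iff hρ hden]; ring
  rw [hwval] at hw ⊢
  have h1 : 1 + (b1 - b2 * X) / (b1 - 3 * b2 * X)
      = (2 * b1 - 4 * b2 * X) / (b1 - 3 * b2 * X) := by
    rw [one_add_div hden]; ring
  have h2 : 5 - 3 * ((b1 - b2 * X) / (b1 - 3 * b2 * X))
      = (2 * b1 - 12 * b2 * X) / (b1 - 3 * b2 * X) := by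
    field_simp; ring
  rw [h2] at hw
  have h3 : 2 * b1 - 12 * b2 * X ≠ 0 := fun h => hw (by rw [h, zero_div])
  rw [hd1, hd2, h1, h2, div_div_div_cancel_right₀, div_eq_div_iff hρ' h3]
  · ring
  · exact hden
end

section
/- Suppose b1 ≤ 0 and b2 ≥ 0 with (b1, b2) ≠ (0, 0). Then for every X > 0 with b1 − 3·b2·X ≠ 0, the equation of state w(X) = (b1 − b2·X)/(b1 − 3·b2·X) satisfies 1/3 ≤ w(X) ≤ 1. -/
/-- Under the stability conditions `b1 ≤ 0`, `b2 ≥ 0`, `(b1,b2) ≠ (0,0)`, for every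
`X > 0` with nonzero denominator, the equation of state
`w = (b1 - b2*X)/(b1 - 3*b2*X)` satisfies `1/3 ≤ w ≤ 1`. -/
theorem kessence_eos_bounds (b1 b2 : ℝ) (hb1 : b1 ≤ 0) (hb2 : 0 ≤ b2)
    (hne : (b1, b2) ≠ (0, 0)) :
    ∀ X : ℝ, 0 < X → b1 - 3 * b2 * X ≠ 0 →
      (1 / 3 ≤ (b1 - b2 * X) / (b1 - 3 * b2 * X) ∧
        (b1 - b2 * X) / (b1 - 3 * b2 * X) ≤ 1) := by
  intro X hX hden
  have hd : b1 - 3 * b2 * X < 0 := by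
    rcases lt_or_eq_of_le hb1 with h | h
    · nlinarith
    · have hb2' : 0 < b2 := by
        rcases lt_or_eq_of_le hb2 with h2 | h2
        · exact h2
        · subst h; subst h2; simp at hne
      nlinarith
  constructor
  · rw [le_div_iff_of_neg hd]
    nlinarith
  · rw [div_le_one_of_neg hd]
    nlinarith
end

section
/- Suppose P : ℝ → ℝ is twice differentiable and X : (0,∞) → (0,∞) is differentiable and satisfies (P'(X(a)) + 2·X(a)·P''(X(a)))·a·X'(a) + 6·X(a)·P'(X(a)) = 0 for all a > 0. Then the function a ↦ a⁶·X(a)·P'(X(a))² is constant. -/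
/-- First integral of purely kinetic k-essence: if `X` solves
`(P' + 2X P'')·a·X' + 6X·P' = 0` on `(0,∞)`, then `a⁶·X·(P'(X))²` is constant
on `(0,∞)`. -/
theorem kessence_first_integral (P X : ℝ → ℝ)
    (hP : Differentiable ℝ P) (hP' : Differentiable ℝ (deriv P))
    (hXpos : ∀ a : ℝ, 0 < a → 0 < X a)
    (hXdiff : ∀ a : ℝ, 0 < a → DifferentiableAt ℝ X a)
    (hode : ∀ a : ℝ, 0 < a →
      (deriv P (X a) + 2 * X a * deriv (deriv P) (X a)) * a * deriv X a
        + 6 * X a * deriv P (X a) = 0) :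
    ∀ a b : ℝ, 0 < a → 0 < b →
      a ^ 6 * X a * (deriv P (X a)) ^ 2 = b ^ 6 * X b * (deriv P (X b)) ^ 2 := by
  set f : ℝ → ℝ := fun a => a ^ 6 * X a * (deriv P (X a)) ^ 2 with hf
  have key : ∀ x : ℝ, 0 < x → HasDerivAt f 0 x := by
    intro x hx
    have hX : HasDerivAt X (deriv X x) x := (hXdiff x hx).hasDerivAt
    have hPX : HasDerivAt (fun a => deriv P (X a))
        (deriv (deriv P) (X x) * deriv X x) x :=
      (hP' (X x)).hasDerivAt.comp x hX
    have h := ((hasDerivAt_pow 6 x).mul hX).mul (hPX.pow 2)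
    refine (h.congr_deriv ?_ : HasDerivAt f _ x)
    simp only [Pi.mul_apply, Pi.pow_apply]
    linear_combination -1 * ((-(x ^ 5) * deriv P (X x)) * hode x hx)
  have main : ∀ a b : ℝ, 0 < a → 0 < b → a ≤ b → f b = f a := by
    intro a b ha hb hab
    have hcont : ContinuousOn f (Set.Icc a b) := by
      intro x hx
      exact ((key x (lt_of_lt_of_le ha hx.1)).differentiableAt.continuousAt).continuousWithinAt
    have hderiv : ∀ x ∈ Set.Ico a b, HasDerivWithinAt f 0 (Set.Ici x) x := by
      intro x hx
      exact (key x (lt_of_lt_of_le ha hx.1)).hasDerivWithinAt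
    exact constant_of_has_deriv_right_zero hcont hderiv b (Set.right_mem_Icc.2 hab)
  intro a b ha hb
  rcases le_total a b with h | h
  · exact (main a b ha hb h).symm
  · exact main b a hb ha h
end
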